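/- Conversely to the previous statement: if q ≥ 0 satisfies A q = β(P) (with A and β(P) as defined), then the probability measure Q on response types defined by Q{R = r} = q(r), coupled with Z drawn independently with the marginal of Z under P, satisfies: Q is a probability measure, Q{R ∈ 𝓡} = 1, P = QT⁻¹, and E_Q[(g(R) − θ₀) 1{R ∈ R'}] = 0. -/

import Mathlib

/-- Converse direction of Lemma 1: if `x ≥ 0` satisfies `Ax = β(P)`, then the measure
on response types with `Q{R = r} = x(r)`, coupled independently with the marginal of
`Z` under `P`, is a probability measure with `Q{R ∈ 𝓡} = 1`, `P = QT⁻¹`, and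
`E_Q[(g(R) − θ₀)1{R ∈ R'}] = 0`. -/
theorem lemma1_converse
    {𝒴 𝒟 𝒵 : Type*} [Fintype 𝒴] [Fintype 𝒟] [Fintype 𝒵]
    [DecidableEq 𝒴] [DecidableEq 𝒟] [DecidableEq 𝒵] [Nonempty 𝒵]
    (p : 𝒴 × 𝒟 × 𝒵 → ℝ) (hp : ∀ m, 0 ≤ p m) (hpsum : ∑ m, p m = 1)
    (hz : ∀ z : 𝒵, 0 < ∑ y, ∑ d, p (y, d, z))
    (𝓡 R' : Finset ((𝒟 → 𝒴) × (𝒵 → 𝒟)))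
    (g : ((𝒟 → 𝒴) × (𝒵 → 𝒟)) → ℝ) (θ₀ : ℝ)
    (x : ((𝒟 → 𝒴) × (𝒵 → 𝒟)) → ℝ) (hx : ∀ r, 0 ≤ x r)
    -- the (y,d,z) rows of Ax = β(P)
    (hobs : ∀ (y : 𝒴) (d : 𝒟) (z : 𝒵),
      (∑ r : (𝒟 → 𝒴) × (𝒵 → 𝒟), if r.1 d = y ∧ r.2 z = d then x r else 0)
        = p (y, d, z) / (∑ y', ∑ d', p (y', d', z)))
    -- the 1{r ∈ 𝓡} row of Ax = β(P)
    (h𝓡 : (∑ r : (𝒟 → 𝒴) × (𝒵 → 𝒟), if r ∈ 𝓡 then x r else 0) = 1)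
    -- the (g(r) − θ₀)1{r ∈ R'} row of Ax = β(P)
    (hmom : (∑ r : (𝒟 → 𝒴) × (𝒵 → 𝒟), if r ∈ R' then (g r - θ₀) * x r else 0) = 0) :
    -- Q defined by q(r, z) = x(r) · P{Z = z} is a probability measure
    (∑ ω : ((𝒟 → 𝒴) × (𝒵 → 𝒟)) × 𝒵, x ω.1 * (∑ y, ∑ d, p (y, d, ω.2))) = 1 ∧
    -- Q{R ∈ 𝓡} = 1
    (∑ r : (𝒟 → 𝒴) × (𝒵 → 𝒟),
        if r ∈ 𝓡 then (∑ z, x r * (∑ y, ∑ d, p (y, d, z))) else 0) = 1 ∧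
    -- P = QT⁻¹
    (∀ (y : 𝒴) (d : 𝒟) (z : 𝒵),
      (∑ r : (𝒟 → 𝒴) × (𝒵 → 𝒟),
          if r.1 (r.2 z) = y ∧ r.2 z = d
          then x r * (∑ y', ∑ d', p (y', d', z)) else 0) = p (y, d, z)) ∧
    -- E_Q[(g(R) − θ₀) 1{R ∈ R'}] = 0
    (∑ r : (𝒟 → 𝒴) × (𝒵 → 𝒟),
        if r ∈ R' then (g r - θ₀) * (∑ z, x r * (∑ y, ∑ d, p (y, d, z))) else 0)
      = 0 := by
  set S : 𝒵 → ℝ := fun z => ∑ y, ∑ d, p (y, d, z) with hSdef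
  have hS1 : ∑ z, S z = 1 := by
    rw [← hpsum, Fintype.sum_prod_type]
    simp only [Fintype.sum_prod_type]
    rw [Finset.sum_comm]
    exact Finset.sum_congr rfl fun z _ => Finset.sum_comm
  have hS1' : ∑ z, ∑ y, ∑ d, p (y, d, z) = 1 := hS1
  have key : ∀ (r : (𝒟 → 𝒴) × (𝒵 → 𝒟)) (z : 𝒵),
      (∑ y : 𝒴, ∑ d : 𝒟, if r.1 d = y ∧ r.2 z = d then x r else 0) = x r := by
    intro r z
    rw [Finset.sum_comm]
    simp [ite_and, Finset.sum_ite_eq, Finset.sum_ite_eq']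
  have hxsum : ∑ r : (𝒟 → 𝒴) × (𝒵 → 𝒟), x r = 1 := by
    have z0 : 𝒵 := Classical.arbitrary 𝒵
    have hRHS : (∑ y, ∑ d, ∑ r : (𝒟 → 𝒴) × (𝒵 → 𝒟),
        if r.1 d = y ∧ r.2 z0 = d then x r else 0) = 1 := by
      simp only [hobs]
      simp only [← Finset.sum_div]
      exact div_self (hz z0).ne'
    calc ∑ r : (𝒟 → 𝒴) × (𝒵 → 𝒟), x r
        = ∑ r : (𝒟 → 𝒴) × (𝒵 → 𝒟), ∑ y, ∑ d,
            if r.1 d = y ∧ r.2 z0 = d then x r else 0 :=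
          (Finset.sum_congr rfl fun r _ => (key r z0).symm)
      _ = ∑ y, ∑ d, ∑ r : (𝒟 → 𝒴) × (𝒵 → 𝒟),
            if r.1 d = y ∧ r.2 z0 = d then x r else 0 := by
          rw [Finset.sum_comm]
          exact Finset.sum_congr rfl fun y _ => Finset.sum_comm
      _ = 1 := hRHS
  refine ⟨?_, ?_, ?_, ?_⟩
  · rw [Fintype.sum_prod_type]
    simp only [← Finset.mul_sum, hS1, hS1', mul_one]
    exact hxsum
  · simp only [← Finset.mul_sum, hS1, hS1', mul_one]
    exact h𝓡
  · intro y d z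
    have hcond : ∀ r : (𝒟 → 𝒴) × (𝒵 → 𝒟),
        (if r.1 (r.2 z) = y ∧ r.2 z = d then x r * S z else 0)
          = (if r.1 d = y ∧ r.2 z = d then x r else 0) * S z := by
      intro r
      by_cases h2 : r.2 z = d
      · rw [h2]; simp [ite_mul]
      · simp [h2]
    rw [Finset.sum_congr rfl fun r _ => hcond r, ← Finset.sum_mul, hobs,
      div_mul_cancel₀ _ (hz z).ne']
  · simp only [← Finset.mul_sum, hS1, hS1', mul_one]
    exact hmom
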